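/- Concatenating a Kunz vector of a numerical semigroup with parts in {1,2,3} ending in a part equal to 3 with any composition having all parts in {1,2} yields again the Kunz vector of a numerical semigroup. Consequently, Kunz vectors with maximum 3 are in bijection with pairs (L, R) where L is a Kunz vector with parts in {1,2,3} ending in 3 and R is an arbitrary composition with parts in {1,2}. -/

import Mathlib

/-- The `j`-th part (`1`-indexed) of a composition given as a list. -/
def partAt (l : List ℕ) (j : ℕ) : ℕ := l.getD (j - 1) 0

/-- A list `(x_1, …, x_{m-1})` is a Kunz vector (NSG-composition) if its parts
are positive and it satisfies the NSG-inequalities (with `m = length + 1`). -/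
def IsKunz (l : List ℕ) : Prop :=
  (∀ i ∈ l, 1 ≤ i) ∧
  (∀ s t : ℕ, 1 ≤ s → 1 ≤ t → s + t ≤ l.length →
    partAt l (s + t) ≤ partAt l s + partAt l t) ∧
  (∀ s t : ℕ, 1 ≤ s → 1 ≤ t → s + t ≤ l.length →
    partAt l (l.length + 1 - s - t) ≤
      partAt l (l.length + 1 - s) + partAt l (l.length + 1 - t) + 1)

lemma partAt_mem {l : List ℕ} {j : ℕ} (h1 : 1 ≤ j) (h2 : j ≤ l.length) : partAt l j ∈ l := by
  unfold partAt
  have h : j - 1 < l.length := by omega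
  rw [List.getD_eq_getElem l 0 h]
  exact List.getElem_mem h

lemma kunz_append (L R : List ℕ) (hK : IsKunz L) (hL3 : ∀ i ∈ L, i ≤ 3)
    (hR : ∀ i ∈ R, i = 1 ∨ i = 2) : IsKunz (L ++ R) := by
  obtain ⟨hpos, hsup, _⟩ := hK
  have hall1 : ∀ i ∈ L ++ R, 1 ≤ i := by
    intro i hi
    rcases List.mem_append.1 hi with h | h
    · exact hpos i h
    · rcases hR i h with rfl | rfl <;> omega
  have hall3 : ∀ i ∈ L ++ R, i ≤ 3 := by
    intro i hi
    rcases List.mem_append.1 hi with h | h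
    · exact hL3 i h
    · rcases hR i h with rfl | rfl <;> omega
  have hlen : (L ++ R).length = L.length + R.length := List.length_append
  refine ⟨hall1, ?_, ?_⟩
  · intro s t hs ht hst
    rw [hlen] at hst
    by_cases h : s + t ≤ L.length
    · have e : ∀ j, 1 ≤ j → j ≤ s + t → partAt (L ++ R) j = partAt L j := by
        intro j h1 h2
        unfold partAt
        exact List.getD_append _ _ _ _ (by omega)
      rw [e (s + t) (by omega) le_rfl, e s hs (by omega), e t ht (by omega)]
      exact hsup s t hs ht h
    · have hl : partAt (L ++ R) (s + t) ≤ 2 := by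
        have e : partAt (L ++ R) (s + t) = partAt R (s + t - L.length) := by
          unfold partAt
          rw [List.getD_append_right _ _ _ _ (by omega)]
          congr 1
          omega
        rw [e]
        have hm := partAt_mem (l := R) (j := s + t - L.length) (by omega) (by omega)
        rcases hR _ hm with h' | h' <;> omega
      have hs' := hall1 _ (partAt_mem (l := L ++ R) (j := s) hs (by omega))
      have ht' := hall1 _ (partAt_mem (l := L ++ R) (j := t) ht (by omega))
      omega
  · intro s t hs ht hst
    have h1 := hall1 _ (partAt_mem (l := L ++ R) (j := (L ++ R).length + 1 - s) (by omega) (by omega))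
    have h2 := hall1 _ (partAt_mem (l := L ++ R) (j := (L ++ R).length + 1 - t) (by omega) (by omega))
    have h3 := hall3 _ (partAt_mem (l := L ++ R) (j := (L ++ R).length + 1 - s - t) (by omega) (by omega))
    omega

lemma kunz_prefix (L R : List ℕ) (hK : IsKunz (L ++ R)) (h3 : ∀ i ∈ L ++ R, i ≤ 3) :
    IsKunz L := by
  obtain ⟨hpos, hsup, _⟩ := hK
  have hlen : L.length ≤ (L ++ R).length := by
    rw [List.length_append]; omega
  have hLpos : ∀ i ∈ L, 1 ≤ i := fun i hi => hpos i (List.mem_append_left _ hi)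
  have hL3 : ∀ i ∈ L, i ≤ 3 := fun i hi => h3 i (List.mem_append_left _ hi)
  refine ⟨hLpos, ?_, ?_⟩
  · intro s t hs ht hst
    have e : ∀ j, 1 ≤ j → j ≤ s + t → partAt (L ++ R) j = partAt L j := by
      intro j h1 h2
      unfold partAt
      exact List.getD_append _ _ _ _ (by omega)
    rw [← e (s + t) (by omega) le_rfl, ← e s hs (by omega), ← e t ht (by omega)]
    exact hsup s t hs ht (by omega)
  · intro s t hs ht hst
    have h1 := hLpos _ (partAt_mem (l := L) (j := L.length + 1 - s) (by omega) (by omega))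
    have h2 := hLpos _ (partAt_mem (l := L) (j := L.length + 1 - t) (by omega) (by omega))
    have hh3 := hL3 _ (partAt_mem (l := L) (j := L.length + 1 - s - t) (by omega) (by omega))
    omega

/-- The predicate "not equal to 3". -/
def p3 : ℕ → Bool := fun x => x != 3

lemma p3_iff (x : ℕ) : p3 x = true ↔ x ≠ 3 := by simp [p3]

lemma split_append (l : List ℕ) : l.rdropWhile p3 ++ l.rtakeWhile p3 = l := by
  rw [List.rdropWhile, List.rtakeWhile, ← List.reverse_append,
    List.takeWhile_append_dropWhile, List.reverse_reverse]

lemma rdrop_getLast? {l : List ℕ} (h : 3 ∈ l) :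
    (l.rdropWhile p3).getLast? = some 3 := by
  have hne : l.rdropWhile p3 ≠ [] := by
    rw [ne_eq, List.rdropWhile_eq_nil_iff]
    push_neg
    exact ⟨3, h, by simp [p3]⟩
  have hlast := List.rdropWhile_last_not p3 l hne
  rw [p3_iff] at hlast
  push_neg at hlast
  rw [List.getLast?_eq_getLast hne, hlast]

lemma rtake_ne3 {l : List ℕ} {x : ℕ} (hx : x ∈ l.rtakeWhile p3) : x ≠ 3 := by
  have := List.mem_rtakeWhile_imp hx
  rwa [p3_iff] at this

lemma split_of_append (L R : List ℕ) (hL : L.getLast? = some 3) (hR : ∀ i ∈ R, i ≠ 3) :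
    (L ++ R).rdropWhile p3 = L ∧ (L ++ R).rtakeWhile p3 = R := by
  obtain ⟨tl, htl⟩ : ∃ tl, L.reverse = 3 :: tl := by
    have : L.reverse.head? = some 3 := by rw [List.head?_reverse, hL]
    exact List.head?_eq_some_iff.1 this
  have hRrev : ∀ x ∈ R.reverse, p3 x = true := by
    intro x hx
    rw [p3_iff]
    exact hR x (List.mem_reverse.1 hx)
  have hp3 : p3 3 = false := by simp [p3]
  constructor
  · rw [List.rdropWhile, List.reverse_append,
      List.dropWhile_append_of_pos hRrev, htl,
      List.dropWhile_cons_of_neg (by simp [hp3]), ← htl, List.reverse_reverse]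
  · rw [List.rtakeWhile, List.reverse_append,
      List.takeWhile_append_of_pos hRrev, htl,
      List.takeWhile_cons_of_neg (by simp [hp3]), List.append_nil, List.reverse_reverse]

/-- Concatenating a Kunz vector with parts in `{1,2,3}` ending in `3` with any
composition with parts in `{1,2}` yields a Kunz vector; consequently Kunz
vectors with maximum `3` correspond bijectively to such pairs. -/
theorem stmt_17 :
    (∀ L R : List ℕ, IsKunz L → (∀ i ∈ L, i ≤ 3) → L.getLast? = some 3 →
      (∀ i ∈ R, i = 1 ∨ i = 2) → IsKunz (L ++ R)) ∧
    Nonempty ({l : List ℕ // IsKunz l ∧ (∀ i ∈ l, i ≤ 3) ∧ 3 ∈ l} ≃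
      {L : List ℕ // IsKunz L ∧ (∀ i ∈ L, i ≤ 3) ∧ L.getLast? = some 3} ×
      {R : List ℕ // ∀ i ∈ R, i = 1 ∨ i = 2}) := by
  constructor
  · intro L R hK hL3 _ hR
    exact kunz_append L R hK hL3 hR
  · refine ⟨⟨fun l => (⟨l.1.rdropWhile p3, ?_, ?_, ?_⟩, ⟨l.1.rtakeWhile p3, ?_⟩),
      fun x => ⟨x.1.1 ++ x.2.1, ?_, ?_, ?_⟩, ?_, ?_⟩⟩
    · -- L is Kunz
      obtain ⟨l, hK, h3, hmem⟩ := l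
      exact kunz_prefix _ _ (by rw [split_append]; exact hK) (by rw [split_append]; exact h3)
    · -- L parts ≤ 3
      intro i hi
      refine l.2.2.1 i ?_
      rw [← split_append l.1]
      exact List.mem_append_left _ hi
    · exact rdrop_getLast? l.2.2.2
    · -- R parts in {1,2}
      intro i hi
      have h1 : 1 ≤ i := by
        refine l.2.1.1 i ?_
        rw [← split_append l.1]
        exact List.mem_append_right _ hi
      have h3 : i ≤ 3 := by
        refine l.2.2.1 i ?_
        rw [← split_append l.1]
        exact List.mem_append_right _ hi
      have := rtake_ne3 hi
      omega
    · exact kunz_append _ _ x.1.2.1 x.1.2.2.1 x.2.2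
    · intro i hi
      rcases List.mem_append.1 hi with h | h
      · exact x.1.2.2.1 i h
      · rcases x.2.2 i h with rfl | rfl <;> omega
    · refine List.mem_append_left _ ?_
      have h := x.1.2.2.2
      exact List.mem_of_getLast? h
    · -- left inverse
      intro l
      exact Subtype.ext (split_append l.1)
    · -- right inverse
      rintro ⟨L, R⟩
      have hs := split_of_append L.1 R.1 L.2.2.2 (by
        intro i hi
        rcases R.2 i hi with rfl | rfl <;> omega)
      exact Prod.ext (Subtype.ext hs.1) (Subtype.ext hs.2)
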